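/- arXiv:1108.5419 — 2 statements merged into one kernel-verified Lean document; each statement's English description precedes it below -/
import Mathlib

section
/- Under the hypotheses of the Fekete–Szegő theorem for K_s(φ) (with φ(z)=1+B₁z+B₂z²+⋯, B₁>0), the third coefficient of f satisfies the sharp bound |a₃| ≤ 1/3 + (B₁/3)·max(1, |B₂|/B₁), and the second coefficient satisfies |a₂| ≤ B₁/2. -/
open Complex Metric Filter Set
open scoped Topology

private lemma aAt_deriv {F : ℂ → ℂ} {x : ℂ} (h : AnalyticAt ℂ F x) : AnalyticAt ℂ (deriv F) x :=
  (AnalyticOnNhd.deriv (s := {y | AnalyticAt ℂ F y}) (fun _ hy => hy)) x h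

private lemma itd_zero_fun (n : ℕ) (x : ℂ) : iteratedDeriv n (fun _ : ℂ => (0:ℂ)) x = 0 := by
  induction n generalizing x with
  | zero => simp
  | succ n ih =>
    rw [iteratedDeriv_succ']
    have h : deriv (fun _ : ℂ => (0:ℂ)) = fun _ : ℂ => (0:ℂ) := by funext y; simp
    rw [h]; exact ih x

private lemma itd_const (c x : ℂ) (n : ℕ) :
    iteratedDeriv (n+1) (fun _ : ℂ => c) x = 0 := by
  rw [iteratedDeriv_succ']
  have h : deriv (fun _ : ℂ => c) = fun _ : ℂ => (0:ℂ) := by funext y; simp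
  rw [h]; exact itd_zero_fun n x

private lemma itd_add {x : ℂ} : ∀ (n : ℕ) (F G : ℂ → ℂ), AnalyticAt ℂ F x → AnalyticAt ℂ G x →
    iteratedDeriv n (fun z => F z + G z) x = iteratedDeriv n F x + iteratedDeriv n G x := by
  intro n
  induction n with
  | zero => intro F G _ _; simp
  | succ n ih =>
    intro F G hF hG
    have hev : deriv (fun z => F z + G z) =ᶠ[𝓝 x] fun z => deriv F z + deriv G z := by
      filter_upwards [hF.eventually_analyticAt, hG.eventually_analyticAt] with y hFy hGy
      exact deriv_add hFy.differentiableAt hGy.differentiableAt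
    rw [iteratedDeriv_succ', Filter.EventuallyEq.iteratedDeriv_eq n hev,
      ih _ _ (aAt_deriv hF) (aAt_deriv hG), ← iteratedDeriv_succ', ← iteratedDeriv_succ']

private lemma itd_mul {x : ℂ} : ∀ (n : ℕ) (F G : ℂ → ℂ), AnalyticAt ℂ F x → AnalyticAt ℂ G x →
    iteratedDeriv n (fun z => F z * G z) x =
      ∑ i ∈ Finset.range (n+1),
        (n.choose i : ℂ) * iteratedDeriv i F x * iteratedDeriv (n-i) G x := by
  intro n
  induction n with
  | zero => intro F G _ _; simp
  | succ n ih =>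
    intro F G hF hG
    have hev : deriv (fun z => F z * G z) =ᶠ[𝓝 x]
        fun z => deriv F z * G z + F z * deriv G z := by
      filter_upwards [hF.eventually_analyticAt, hG.eventually_analyticAt] with y hFy hGy
      exact deriv_mul hFy.differentiableAt hGy.differentiableAt
    rw [iteratedDeriv_succ', Filter.EventuallyEq.iteratedDeriv_eq n hev,
      itd_add n (fun z => deriv F z * G z) (fun z => F z * deriv G z) ((aAt_deriv hF).mul hG) (hF.mul (aAt_deriv hG)),
      ih _ _ (aAt_deriv hF) hG, ih _ _ hF (aAt_deriv hG)]
    have e1 : ∀ i, iteratedDeriv i (deriv F) x = iteratedDeriv (i+1) F x := by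
      intro i; rw [← iteratedDeriv_succ']
    have e2 : ∀ i, iteratedDeriv i (deriv G) x = iteratedDeriv (i+1) G x := by
      intro i; rw [← iteratedDeriv_succ']
    simp only [e1, e2]
    -- RHS target
    rw [Finset.sum_range_succ'
      (fun i => ((n+1).choose i : ℂ) * iteratedDeriv i F x * iteratedDeriv (n+1-i) G x) (n+1)]
    have key : ∀ i ∈ Finset.range (n+1),
        (((n+1).choose (i+1) : ℂ)) * iteratedDeriv (i+1) F x * iteratedDeriv (n+1-(i+1)) G x
        = ((n.choose i : ℂ)) * iteratedDeriv (i+1) F x * iteratedDeriv (n-i) G x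
          + ((n.choose (i+1) : ℂ)) * iteratedDeriv (i+1) F x * iteratedDeriv (n-i) G x := by
      intro i _
      have : (n+1).choose (i+1) = n.choose i + n.choose (i+1) := Nat.choose_succ_succ n i
      rw [Nat.succ_sub_succ, this]
      push_cast
      ring
    rw [Finset.sum_congr rfl key, Finset.sum_add_distrib]
    have e3 : ∀ i ∈ Finset.range (n+1),
        (n.choose i : ℂ) * iteratedDeriv i F x * iteratedDeriv (n-i+1) G x
        = (n.choose i : ℂ) * iteratedDeriv i F x * iteratedDeriv (n+1-i) G x := by
      intro i hi
      rw [Finset.mem_range] at hi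
      rw [Nat.sub_add_comm (Nat.lt_succ_iff.mp hi)]
    rw [Finset.sum_congr rfl e3]
    have e4 : (∑ i ∈ Finset.range (n+1),
          (n.choose (i+1) : ℂ) * iteratedDeriv (i+1) F x * iteratedDeriv (n-i) G x)
        + ((n+1).choose 0 : ℂ) * iteratedDeriv 0 F x * iteratedDeriv (n+1-0) G x
        = ∑ i ∈ Finset.range (n+1),
          (n.choose i : ℂ) * iteratedDeriv i F x * iteratedDeriv (n+1-i) G x := by
      have := Finset.sum_range_succ'
        (fun i => (n.choose i : ℂ) * iteratedDeriv i F x * iteratedDeriv (n+1-i) G x) (n+1)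
      -- sum over range (n+2) = sum over range (n+1) of shifted + i=0 term
      rw [Finset.sum_range_succ
        (fun i => (n.choose i : ℂ) * iteratedDeriv i F x * iteratedDeriv (n+1-i) G x) (n+1)] at this
      simp only [Nat.choose_succ_self, Nat.cast_zero, zero_mul, add_zero, Nat.succ_sub_succ] at this
      simp only [Nat.choose_zero_right, Nat.cast_one] at this ⊢
      linear_combination -this
    linear_combination -e4


private lemma itd_eq_coeff {F : ℂ → ℂ} {p : FormalMultilinearSeries ℂ ℂ ℂ}
    (hp : HasFPowerSeriesAt F p 0) (n : ℕ) :
    iteratedDeriv n F 0 = (n.factorial : ℂ) * p.coeff n := by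
  obtain ⟨r, hr⟩ := hp
  have h := hr.factorial_smul (1 : ℂ) n
  rw [iteratedDeriv_eq_iteratedFDeriv, ← h]
  have h2 : p n (fun _ => (1:ℂ)) = p.coeff n := rfl
  rw [h2, nsmul_eq_mul]

private lemma itd_dslope {F : ℂ → ℂ} (hF : AnalyticAt ℂ F 0) (n : ℕ) :
    ((n : ℂ) + 1) * iteratedDeriv n (dslope F 0) 0 = iteratedDeriv (n+1) F 0 := by
  obtain ⟨p, hp⟩ := hF
  have h2 := hp.has_fpower_series_dslope_fslope
  rw [itd_eq_coeff hp, itd_eq_coeff h2, FormalMultilinearSeries.coeff_fslope]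
  rw [Nat.factorial_succ]
  push_cast
  ring

private lemma dslope_analytic {F : ℂ → ℂ} (hF : AnalyticOnNhd ℂ F (ball 0 1)) (hF0 : F 0 = 0) :
    AnalyticOnNhd ℂ (dslope F 0) (ball 0 1) := by
  intro z hz
  rcases eq_or_ne z 0 with rfl | hne
  · obtain ⟨p, hp⟩ := hF 0 hz
    exact hp.has_fpower_series_dslope_fslope.analyticAt
  · have hev : (fun y => F y / y) =ᶠ[𝓝 z] dslope F 0 := by
      filter_upwards [isOpen_compl_singleton.mem_nhds (by simpa using hne : z ∈ ({0}ᶜ : Set ℂ))]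
        with y hy
      have hy0 : y ≠ 0 := by simpa using hy
      rw [dslope_of_ne _ hy0, slope_def_field, hF0]
      simp
    exact (((hF z hz).div analyticAt_id hne)).congr hev

private lemma dslope_of_ne_zero {F : ℂ → ℂ} (hF0 : F 0 = 0) {z : ℂ} (hz : z ≠ 0) :
    dslope F 0 z = F z / z := by
  rw [dslope_of_ne _ hz, slope_def_field, hF0]
  simp

private lemma schwarz_coeffs {u : ℂ → ℂ} (hu : AnalyticOnNhd ℂ u (ball 0 1)) (hu0 : u 0 = 0)
    (hub : ∀ z ∈ ball (0:ℂ) 1, ‖u z‖ < 1) :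
    ‖deriv u 0‖ ≤ 1 ∧
    ‖iteratedDeriv 2 u 0 / 2‖ ≤ 1 - ‖deriv u 0‖ ^ 2 := by
  have hball : (0:ℂ) ∈ ball (0:ℂ) 1 := by simp
  set v := dslope u 0 with hv_def
  have hv : AnalyticOnNhd ℂ v (ball 0 1) := dslope_analytic hu hu0
  have hmaps : MapsTo u (ball (0:ℂ) 1) (ball (u 0) 1) := by
    intro z hz
    rw [hu0]
    simpa [mem_ball, dist_eq_norm] using hub z hz
  have hvb : ∀ z ∈ ball (0:ℂ) 1, ‖v z‖ ≤ 1 := by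
    intro z hz
    have := Complex.norm_dslope_le_div_of_mapsTo_ball hu.differentiableOn (hmaps.mono_right ball_subset_closedBall) hz
    simpa using this
  have hv0 : v 0 = deriv u 0 := dslope_same u 0
  have hdv : deriv v 0 = iteratedDeriv 2 u 0 / 2 := by
    have h := itd_dslope (hu 0 hball) 1
    rw [iteratedDeriv_one] at h
    have : ((1:ℕ) : ℂ) + 1 = 2 := by norm_num
    rw [this] at h
    field_simp
    linear_combination h
  have h1 : ‖deriv u 0‖ ≤ 1 := by
    rw [← hv0]; exact hvb 0 hball
  refine ⟨h1, ?_⟩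
  rw [← hdv, ← hv0]
  by_cases hcase : ∃ z₀ ∈ ball (0:ℂ) 1, ‖v z₀‖ = 1
  · obtain ⟨z₀, hz₀, habs⟩ := hcase
    have hmax : IsMaxOn (norm ∘ v) (ball (0:ℂ) 1) z₀ := by
      intro z hz
      simp only [Function.comp_apply]
      rw [habs]
      exact hvb z hz
    have heq := Complex.eqOn_of_isPreconnected_of_isMaxOn_norm
      (convex_ball (0:ℂ) 1).isPreconnected isOpen_ball hv.differentiableOn hz₀ hmax
    have hvev : v =ᶠ[𝓝 (0:ℂ)] fun _ => v z₀ := by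
      filter_upwards [isOpen_ball.mem_nhds hball] with y hy
      exact heq hy
    have : deriv v 0 = 0 := by
      rw [hvev.deriv_eq]
      simp
    rw [this]
    have : ‖v 0‖ = 1 := by
      rw [heq hball]; exact habs
    simp [this]
  · push_neg at hcase
    have hvlt : ∀ z ∈ ball (0:ℂ) 1, ‖v z‖ < 1 :=
      fun z hz => lt_of_le_of_ne (hvb z hz) (hcase z hz)
    set a := v 0 with ha_def
    have ha : ‖a‖ < 1 := hvlt 0 hball
    set den := fun z => 1 - (starRingEnd ℂ) a * v z with hden_def
    have hden : ∀ z ∈ ball (0:ℂ) 1, den z ≠ 0 := by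
      intro z hz
      have : ‖(starRingEnd ℂ) a * v z‖ < 1 := by
        rw [norm_mul, Complex.norm_conj]
        calc ‖a‖ * ‖v z‖ ≤ 1 * ‖v z‖ :=
              mul_le_mul_of_nonneg_right ha.le (norm_nonneg _)
          _ = ‖v z‖ := one_mul _
          _ < 1 := hvlt z hz
      intro h0
      rw [sub_eq_zero] at h0
      rw [← h0] at this
      simp at this
    set M := fun z => (v z - a) / den z with hM_def
    have hManal : AnalyticOnNhd ℂ M (ball 0 1) := by
      intro z hz
      exact ((hv z hz).sub analyticAt_const).div
        (analyticAt_const.sub (analyticAt_const.mul (hv z hz))) (hden z hz)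
    have hM0 : M 0 = 0 := by
      simp [hM_def]
      exact Or.inl (sub_self _)
    have hkey : ∀ ζ : ℂ, Complex.normSq (1 - (starRingEnd ℂ) a * ζ) - Complex.normSq (ζ - a)
        = (1 - Complex.normSq a) * (1 - Complex.normSq ζ) := by
      intro ζ
      simp only [Complex.normSq_apply, Complex.sub_re, Complex.sub_im, Complex.mul_re,
        Complex.mul_im, Complex.one_re, Complex.one_im, Complex.conj_re, Complex.conj_im]
      ring
    have hMmaps : MapsTo M (ball (0:ℂ) 1) (ball (M 0) 1) := by
      intro z hz
      rw [hM0, mem_ball, dist_eq_norm, sub_zero]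
      have hpos : 0 < Complex.normSq (den z) := by
        exact Complex.normSq_pos.mpr (hden z hz)
      have hlt : Complex.normSq (v z - a) < Complex.normSq (den z) := by
        have h1 : Complex.normSq a < 1 := by
          rw [← Complex.sq_norm]
          nlinarith [norm_nonneg a]
        have h2 : Complex.normSq (v z) < 1 := by
          rw [← Complex.sq_norm]
          nlinarith [norm_nonneg (v z), hvlt z hz]
        nlinarith [hkey (v z)]
      have : ‖v z - a‖ < ‖den z‖ := by
        rw [Complex.norm_def, Complex.norm_def]
        exact Real.sqrt_lt_sqrt (Complex.normSq_nonneg _) hlt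
      rw [hM_def]
      simp only [norm_div]
      rw [div_lt_one (norm_pos_iff.mpr (hden z hz))]
      exact this
    have hMd : ‖deriv M 0‖ ≤ 1 := by
      have := Complex.norm_deriv_le_div_of_mapsTo_ball hManal.differentiableOn (hMmaps.mono_right ball_subset_closedBall) one_pos
      simpa using this
    have hvdiff : DifferentiableAt ℂ v 0 := (hv 0 hball).differentiableAt
    have hdendiff : DifferentiableAt ℂ den 0 :=
      (differentiableAt_const _).sub ((differentiableAt_const _).mul hvdiff)
    have hderivM : deriv M 0 = deriv v 0 / den 0 := by
      simp only [hM_def, hden_def]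
      rw [deriv_fun_div (hvdiff.sub_const _) hdendiff (hden 0 hball)]
      have h1 : deriv (fun y => v y - a) 0 = deriv v 0 := by
        simp [deriv_sub_const]
      have h2 : v 0 - a = 0 := by rw [ha_def]; ring
      have hd0x : (1 - (starRingEnd ℂ) a * v 0) ≠ 0 := hden 0 hball
      rw [h1, h2, zero_mul, sub_zero, sq]
      exact mul_div_mul_right _ _ hd0x
    have hden0 : den 0 = ((1 - Complex.normSq a : ℝ) : ℂ) := by
      rw [hden_def]
      simp only
      rw [mul_comm, Complex.mul_conj]
      push_cast
      ring
    have habs_eq : ‖deriv M 0‖ = ‖deriv v 0‖ / (1 - Complex.normSq a) := by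
      rw [hderivM, norm_div, hden0, Complex.norm_real, Real.norm_eq_abs, abs_of_pos]
      rw [← Complex.sq_norm]
      nlinarith [norm_nonneg a]
    have hpos : (0:ℝ) < 1 - Complex.normSq a := by
      rw [← Complex.sq_norm]; nlinarith [norm_nonneg a]
    rw [habs_eq, div_le_one hpos] at hMd
    calc ‖deriv v 0‖ ≤ 1 - Complex.normSq a := hMd
      _ = 1 - ‖a‖ ^ 2 := by rw [← Complex.sq_norm]


set_option maxHeartbeats 1600000 in
theorem coeff_bounds_Ks (f g w φ : ℂ → ℂ)
    (hf : AnalyticOnNhd ℂ f (ball (0:ℂ) 1)) (hf0 : f 0 = 0) (hf1 : deriv f 0 = 1)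
    (hg : AnalyticOnNhd ℂ g (ball (0:ℂ) 1)) (hg0 : g 0 = 0) (hg1 : deriv g 0 = 1)
    (hstar : ∀ z ∈ ball (0:ℂ) 1, z ≠ 0 → 1 / 2 < (z * deriv g z / g z).re)
    (hw : AnalyticOnNhd ℂ w (ball (0:ℂ) 1)) (hw0 : w 0 = 0)
    (hwb : ∀ z ∈ ball (0:ℂ) 1, ‖w z‖ < 1)
    (hφ : AnalyticOnNhd ℂ φ (ball (0:ℂ) 1)) (hφ0 : φ 0 = 1)
    (B₁ : ℝ) (hB₁ : 0 < B₁) (hB₁' : iteratedDeriv 1 φ 0 = (B₁ : ℂ))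
    (B₂ : ℂ) (hB₂ : B₂ = iteratedDeriv 2 φ 0 / 2)
    (a₂ a₃ : ℂ) (ha₂ : a₂ = iteratedDeriv 2 f 0 / 2) (ha₃ : a₃ = iteratedDeriv 3 f 0 / 6)
    (hsub : ∀ z ∈ ball (0:ℂ) 1, z ≠ 0 →
      -(z ^ 2 * deriv f z) / (g z * g (-z)) = φ (w z)) :
    ‖a₃‖ ≤ 1 / 3 + (B₁ / 3) * max 1 (‖B₂‖ / B₁) ∧
    ‖a₂‖ ≤ B₁ / 2 := by
  have ball0 : (0:ℂ) ∈ ball (0:ℂ) 1 := by simp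
  have hf0' : AnalyticAt ℂ f 0 := hf 0 ball0
  have hg0' : AnalyticAt ℂ g 0 := hg 0 ball0
  have hw0' : AnalyticAt ℂ w 0 := hw 0 ball0
  have hφw : AnalyticAt ℂ φ (w 0) := by rw [hw0]; exact hφ 0 ball0
  have hgne : ∀ z ∈ ball (0:ℂ) 1, z ≠ 0 → g z ≠ 0 := by
    intro z hz hz0 h0
    have h := hstar z hz hz0
    rw [h0, div_zero] at h
    simp at h
    norm_num at h
  have hnegball : ∀ z ∈ ball (0:ℂ) 1, -z ∈ ball (0:ℂ) 1 := by
    intro z hz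
    rw [mem_ball_zero_iff] at hz ⊢
    simpa using hz
  obtain ⟨hc1b, hc2b⟩ := schwarz_coeffs hw hw0 hwb
  set c₁ := deriv w 0 with hc₁def
  set c₂ := iteratedDeriv 2 w 0 / 2 with hc₂def
  set G2 := iteratedDeriv 2 g 0 with hG2def
  set G3 := iteratedDeriv 3 g 0 with hG3def
  have hsqderiv : deriv (fun z:ℂ => z^2) = fun z:ℂ => 2*z := by
    funext z; rw [deriv_pow_field]; norm_num
  have hsqderiv2 : deriv (fun z:ℂ => 2*z) = fun _ : ℂ => (2:ℂ) := by
    funext z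
    rw [deriv_const_mul _ (differentiableAt_fun_id)]
    simp
  have hsq0 : iteratedDeriv 0 (fun z:ℂ => z^2) 0 = 0 := by simp
  have hsq1 : iteratedDeriv 1 (fun z:ℂ => z^2) 0 = 0 := by
    rw [iteratedDeriv_one, hsqderiv]
    norm_num
  have hsq2 : iteratedDeriv 2 (fun z:ℂ => z^2) 0 = 2 := by
    rw [show iteratedDeriv 2 (fun z:ℂ => z^2) = iteratedDeriv 1 (deriv (fun z:ℂ => z^2))
      from iteratedDeriv_succ', hsqderiv, iteratedDeriv_one, hsqderiv2]
  have hsq3 : iteratedDeriv 3 (fun z:ℂ => z^2) 0 = 0 := by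
    rw [show iteratedDeriv 3 (fun z:ℂ => z^2) = iteratedDeriv 2 (deriv (fun z:ℂ => z^2))
      from iteratedDeriv_succ', hsqderiv,
      show iteratedDeriv 2 (fun z:ℂ => 2*z) = iteratedDeriv 1 (deriv (fun z:ℂ => 2*z))
      from iteratedDeriv_succ', hsqderiv2]
    exact itd_const 2 0 0
  have hsq4 : iteratedDeriv 4 (fun z:ℂ => z^2) 0 = 0 := by
    rw [show iteratedDeriv 4 (fun z:ℂ => z^2) = iteratedDeriv 3 (deriv (fun z:ℂ => z^2))
      from iteratedDeriv_succ', hsqderiv,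
      show iteratedDeriv 3 (fun z:ℂ => 2*z) = iteratedDeriv 2 (deriv (fun z:ℂ => 2*z))
      from iteratedDeriv_succ', hsqderiv2]
    exact itd_const 2 0 1
  have hg_0 : iteratedDeriv 0 g 0 = 0 := by simpa using hg0
  have hg_1 : iteratedDeriv 1 g 0 = 1 := by rw [iteratedDeriv_one]; exact hg1
  have hw_2 : iteratedDeriv 2 w 0 = 2*c₂ := by rw [hc₂def]; ring
  have hφ_1 : deriv φ 0 = (B₁:ℂ) := by rw [← iteratedDeriv_one]; exact hB₁'
  have hφ_2 : iteratedDeriv 2 φ 0 = 2*B₂ := by rw [hB₂]; ring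
  have hdf_0 : iteratedDeriv 0 (deriv f) 0 = 1 := by simpa using hf1
  have hdf_1 : iteratedDeriv 1 (deriv f) 0 = 2*a₂ := by
    rw [show iteratedDeriv 1 (deriv f) = iteratedDeriv 2 f from (iteratedDeriv_succ').symm, ha₂]
    ring
  have hdf_2 : iteratedDeriv 2 (deriv f) 0 = 6*a₃ := by
    rw [show iteratedDeriv 2 (deriv f) = iteratedDeriv 3 f from (iteratedDeriv_succ').symm, ha₃]
    ring
  set Φ := fun z => φ (w z) with hΦdef
  have hΦ_an : AnalyticAt ℂ Φ 0 := hφw.comp hw0'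
  have hΦ_0 : iteratedDeriv 0 Φ 0 = 1 := by simp [hΦdef, hw0, hφ0]
  have hΦ_1 : iteratedDeriv 1 Φ 0 = (B₁:ℂ) * c₁ := by
    rw [iteratedDeriv_one]
    have h : deriv Φ 0 = deriv φ (w 0) * deriv w 0 :=
      deriv_comp 0 hφw.differentiableAt hw0'.differentiableAt
    rw [h, hw0, hφ_1, hc₁def]
  have hΦev : deriv Φ =ᶠ[𝓝 (0:ℂ)] fun z => deriv φ (w z) * deriv w z := by
    have hwc : ContinuousAt w 0 := hw0'.continuousAt
    filter_upwards [hw0'.eventually_analyticAt, hwc.eventually hφw.eventually_analyticAt]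
      with y hwy hφy
    exact deriv_comp y hφy.differentiableAt hwy.differentiableAt
  have hΦ_2 : iteratedDeriv 2 Φ 0 = 2*B₂*c₁^2 + (B₁:ℂ)*(2*c₂) := by
    rw [show iteratedDeriv 2 Φ = iteratedDeriv 1 (deriv Φ) from iteratedDeriv_succ',
      iteratedDeriv_one, hΦev.deriv_eq]
    have hdφw_an : AnalyticAt ℂ (fun z => deriv φ (w z)) 0 := (aAt_deriv hφw).comp hw0'
    rw [deriv_fun_mul hdφw_an.differentiableAt (aAt_deriv hw0').differentiableAt]
    have h1 : deriv (fun z => deriv φ (w z)) 0 = deriv (deriv φ) (w 0) * deriv w 0 :=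
      deriv_comp 0 (aAt_deriv hφw).differentiableAt hw0'.differentiableAt
    have h2 : deriv (deriv φ) 0 = iteratedDeriv 2 φ 0 := by
      rw [show iteratedDeriv 2 φ = iteratedDeriv 1 (deriv φ) from iteratedDeriv_succ',
        iteratedDeriv_one]
    have h3 : deriv (deriv w) 0 = iteratedDeriv 2 w 0 := by
      rw [show iteratedDeriv 2 w = iteratedDeriv 1 (deriv w) from iteratedDeriv_succ',
        iteratedDeriv_one]
    rw [h1, hw0, h2, hφ_2, h3, hw_2, hφ_1, hc₁def]
    ring
  set P := fun z => g z * g (-z) with hPdef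
  have hgneg_an : AnalyticAt ℂ (fun z => g (-z)) 0 := by
    have h : AnalyticAt ℂ g (-0 : ℂ) := by rw [neg_zero]; exact hg0'
    exact h.comp analyticAt_id.neg
  have hP_an : AnalyticAt ℂ P 0 := hg0'.mul hgneg_an
  have hgneg_itd : ∀ n:ℕ, iteratedDeriv n (fun z => g (-z)) 0
      = (-1:ℂ)^n * iteratedDeriv n g 0 := by
    intro n
    have h := iteratedDeriv_comp_neg n g 0
    rw [neg_zero] at h
    simpa [smul_eq_mul] using h
  have hP_0 : iteratedDeriv 0 P 0 = 0 := by simp [hPdef, hg0]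
  have hP_1 : iteratedDeriv 1 P 0 = 0 := by
    rw [hPdef, itd_mul 1 g (fun z => g (-z)) hg0' hgneg_an]
    simp only [Finset.sum_range_succ, Finset.sum_range_zero, hgneg_itd]
    rw [hg_0, hg_1]
    norm_num
  have hP_2 : iteratedDeriv 2 P 0 = -2 := by
    rw [hPdef, itd_mul 2 g (fun z => g (-z)) hg0' hgneg_an]
    simp only [Finset.sum_range_succ, Finset.sum_range_zero, hgneg_itd]
    rw [hg_0, hg_1]
    norm_num
  have hP_3 : iteratedDeriv 3 P 0 = 0 := by
    rw [hPdef, itd_mul 3 g (fun z => g (-z)) hg0' hgneg_an]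
    simp only [Finset.sum_range_succ, Finset.sum_range_zero, hgneg_itd]
    rw [hg_0, hg_1, ← hG2def]
    norm_num
  have hP_4 : iteratedDeriv 4 P 0 = 6*G2^2 - 8*G3 := by
    rw [hPdef, itd_mul 4 g (fun z => g (-z)) hg0' hgneg_an]
    simp only [Finset.sum_range_succ, Finset.sum_range_zero, hgneg_itd]
    rw [hg_0, hg_1, ← hG2def, ← hG3def]
    simp only [show Nat.choose 4 2 = 6 from rfl]
    norm_num
    ring
  have hEqOn : EqOn (fun z => -(z^2 * deriv f z)) (fun z => Φ z * P z) (ball (0:ℂ) 1) := by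
    intro z hz
    show -(z^2 * deriv f z) = Φ z * P z
    have hΦz : Φ z = φ (w z) := rfl
    have hPz : P z = g z * g (-z) := rfl
    rcases eq_or_ne z 0 with rfl | hz0
    · rw [hΦz, hPz]
      simp [hg0]
    · have hPne : g z * g (-z) ≠ 0 :=
        mul_ne_zero (hgne z hz hz0) (hgne (-z) (hnegball z hz) (neg_ne_zero.mpr hz0))
      have h := hsub z hz hz0
      rw [div_eq_iff hPne] at h
      rw [hΦz, hPz, ← h]
  have hitd : ∀ n:ℕ, iteratedDeriv n (fun z => -(z^2 * deriv f z)) 0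
      = iteratedDeriv n (fun z => Φ z * P z) 0 :=
    fun n => (hEqOn.iteratedDeriv_of_isOpen isOpen_ball n) ball0
  have hsq_an : AnalyticAt ℂ (fun z:ℂ => z^2) 0 := analyticAt_id.pow 2
  have hdf_an : AnalyticAt ℂ (deriv f) 0 := aAt_deriv hf0'
  have hE3 : (12:ℂ)*a₂ = 6*((B₁:ℂ)*c₁) := by
    have h := hitd 3
    rw [iteratedDeriv_fun_neg, itd_mul 3 (fun z:ℂ => z^2) (deriv f) hsq_an hdf_an,
      itd_mul 3 Φ P hΦ_an hP_an] at h
    simp only [Finset.sum_range_succ, Finset.sum_range_zero] at h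
    rw [hsq0, hsq1, hsq2, hsq3, hdf_0, hdf_1,
      hP_0, hP_1, hP_2, hP_3, hΦ_0, hΦ_1] at h
    norm_num at h
    linear_combination h
  have hE4 : (72:ℂ)*a₃ = 8*G3 - 6*G2^2 + 12*(2*B₂*c₁^2 + (B₁:ℂ)*(2*c₂)) := by
    have h := hitd 4
    rw [iteratedDeriv_fun_neg, itd_mul 4 (fun z:ℂ => z^2) (deriv f) hsq_an hdf_an,
      itd_mul 4 Φ P hΦ_an hP_an] at h
    simp only [Finset.sum_range_succ, Finset.sum_range_zero] at h
    rw [hsq0, hsq1, hsq2, hsq3, hsq4, hdf_1, hdf_2,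
      hP_0, hP_1, hP_2, hP_3, hP_4, hΦ_0, hΦ_1, hΦ_2] at h
    simp only [show Nat.choose 4 2 = 6 from rfl] at h
    norm_num at h
    linear_combination -h
  set s := dslope g 0 with hsdef
  have hs_an : AnalyticOnNhd ℂ s (ball 0 1) := dslope_analytic hg hg0
  have hs0 : s 0 = 1 := by rw [hsdef, dslope_same]; exact hg1
  have hsne : ∀ z ∈ ball (0:ℂ) 1, s z ≠ 0 := by
    intro z hz
    rcases eq_or_ne z 0 with rfl | hz0
    · rw [hs0]; exact one_ne_zero
    · rw [hsdef, dslope_of_ne_zero hg0 hz0]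
      exact div_ne_zero (hgne z hz hz0) hz0
  set H := fun z => deriv g z / s z with hHdef
  have hH_an : AnalyticOnNhd ℂ H (ball 0 1) :=
    fun z hz => ((hg.deriv) z hz).div (hs_an z hz) (hsne z hz)
  have hH0 : H 0 = 1 := by
    show deriv g 0 / s 0 = 1
    rw [hs0, hg1, div_one]
  have hHre : ∀ z ∈ ball (0:ℂ) 1, 1/2 < (H z).re := by
    intro z hz
    rcases eq_or_ne z 0 with rfl | hz0
    · rw [hH0]; norm_num
    · have hgz := hgne z hz hz0
      have heq : H z = z * deriv g z / g z := by
        show deriv g z / s z = z * deriv g z / g z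
        rw [hsdef, dslope_of_ne_zero hg0 hz0]
        rw [div_div_eq_mul_div]
        field_simp
      rw [heq]; exact hstar z hz hz0
  have hHne : ∀ z ∈ ball (0:ℂ) 1, H z ≠ 0 := by
    intro z hz h0
    have h := hHre z hz
    rw [h0] at h
    simp at h
    linarith
  set q := fun z => (H z - 1) / H z with hqdef
  have hq_an : AnalyticOnNhd ℂ q (ball 0 1) :=
    fun z hz => ((hH_an z hz).sub analyticAt_const).div (hH_an z hz) (hHne z hz)
  have hq0 : q 0 = 0 := by
    show (H 0 - 1) / H 0 = 0
    rw [hH0]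
    simp
  have hqlt : ∀ z ∈ ball (0:ℂ) 1, ‖q z‖ < 1 := by
    intro z hz
    show ‖(H z - 1) / H z‖ < 1
    rw [norm_div, div_lt_one (norm_pos_iff.mpr (hHne z hz))]
    have hre := hHre z hz
    have hlt : Complex.normSq (H z - 1) < Complex.normSq (H z) := by
      simp only [Complex.normSq_apply, Complex.sub_re, Complex.sub_im,
        Complex.one_re, Complex.one_im]
      nlinarith [hre]
    rw [Complex.norm_def, Complex.norm_def]
    exact Real.sqrt_lt_sqrt (Complex.normSq_nonneg _) hlt
  obtain ⟨hq1b, hq2b⟩ := schwarz_coeffs hq_an hq0 hqlt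
  set q1 := deriv q 0 with hq1def
  set q2 := iteratedDeriv 2 q 0 with hq2def
  have hs_itd1 : iteratedDeriv 1 s 0 = G2 / 2 := by
    have h := itd_dslope hg0' 1
    rw [← hsdef, ← hG2def] at h
    push_cast at h
    linear_combination h/2
  have hs_itd2 : iteratedDeriv 2 s 0 = G3 / 3 := by
    have h := itd_dslope hg0' 2
    rw [← hsdef, ← hG3def] at h
    push_cast at h
    linear_combination h/3
  have hs_itd0 : iteratedDeriv 0 s 0 = 1 := by simpa using hs0
  have hH_itd0 : iteratedDeriv 0 H 0 = 1 := by simpa using hH0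
  have hgHs : EqOn (deriv g) (fun z => H z * s z) (ball (0:ℂ) 1) := by
    intro z hz
    show deriv g z = H z * s z
    have hHz : H z = deriv g z / s z := rfl
    rw [hHz, div_mul_cancel₀ _ (hsne z hz)]
  set H1 := iteratedDeriv 1 H 0 with hH1def
  set H2 := iteratedDeriv 2 H 0 with hH2def
  have hdg_1 : iteratedDeriv 1 (deriv g) 0 = G2 := by
    rw [show iteratedDeriv 1 (deriv g) = iteratedDeriv 2 g from (iteratedDeriv_succ').symm,
      ← hG2def]
  have hdg_2 : iteratedDeriv 2 (deriv g) 0 = G3 := by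
    rw [show iteratedDeriv 2 (deriv g) = iteratedDeriv 3 g from (iteratedDeriv_succ').symm,
      ← hG3def]
  have hgHs1 : G2 = H1 + G2/2 := by
    have h := (hgHs.iteratedDeriv_of_isOpen isOpen_ball 1) ball0
    rw [itd_mul 1 H s (hH_an 0 ball0) (hs_an 0 ball0), hdg_1] at h
    simp only [Finset.sum_range_succ, Finset.sum_range_zero] at h
    rw [hs_itd0, hs_itd1, hH_itd0, ← hH1def] at h
    norm_num at h
    linear_combination h
  have hgHs2 : G3 = G3/3 + 2*H1*(G2/2) + H2 := by
    have h := (hgHs.iteratedDeriv_of_isOpen isOpen_ball 2) ball0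
    rw [itd_mul 2 H s (hH_an 0 ball0) (hs_an 0 ball0), hdg_2] at h
    simp only [Finset.sum_range_succ, Finset.sum_range_zero] at h
    rw [hs_itd0, hs_itd1, hs_itd2, hH_itd0, ← hH1def, ← hH2def] at h
    norm_num at h
    linear_combination h
  have hHq : EqOn (fun z => H z * (1 - q z)) (fun _ : ℂ => (1:ℂ)) (ball (0:ℂ) 1) := by
    intro z hz
    show H z * (1 - q z) = 1
    have hqz : q z = (H z - 1) / H z := rfl
    rw [hqz]
    field_simp [hHne z hz]
    ring
  have hK_an : AnalyticAt ℂ (fun z => 1 - q z) 0 := analyticAt_const.sub (hq_an 0 ball0)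
  have hK_0 : iteratedDeriv 0 (fun z => 1 - q z) 0 = 1 := by simp [hq0]
  have hK_eq : (fun z => 1 - q z) = (fun z => (fun _:ℂ => (1:ℂ)) z + (fun z => -(q z)) z) := by
    funext z; ring
  have hK_1 : iteratedDeriv 1 (fun z => 1 - q z) 0 = -q1 := by
    rw [hK_eq, itd_add 1 (fun _:ℂ => (1:ℂ)) (fun z => -(q z)) analyticAt_const (hq_an 0 ball0).neg, itd_const 1 0 0,
      iteratedDeriv_fun_neg, iteratedDeriv_one, ← hq1def]
    ring
  have hK_2 : iteratedDeriv 2 (fun z => 1 - q z) 0 = -q2 := by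
    rw [hK_eq, itd_add 2 (fun _:ℂ => (1:ℂ)) (fun z => -(q z)) analyticAt_const (hq_an 0 ball0).neg, itd_const 1 0 1,
      iteratedDeriv_fun_neg, ← hq2def]
    ring
  have hHq1 : H1 - q1 = 0 := by
    have h := (hHq.iteratedDeriv_of_isOpen isOpen_ball 1) ball0
    rw [itd_mul 1 H _ (hH_an 0 ball0) hK_an, itd_const 1 0 0] at h
    simp only [Finset.sum_range_succ, Finset.sum_range_zero] at h
    rw [hK_0, hK_1, hH_itd0, ← hH1def] at h
    norm_num at h
    linear_combination h
  have hHq2 : H2 - 2*H1*q1 - q2 = 0 := by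
    have h := (hHq.iteratedDeriv_of_isOpen isOpen_ball 2) ball0
    rw [itd_mul 2 H _ (hH_an 0 ball0) hK_an, itd_const 1 0 1] at h
    simp only [Finset.sum_range_succ, Finset.sum_range_zero] at h
    rw [hK_0, hK_1, hK_2, hH_itd0, ← hH1def, ← hH2def] at h
    norm_num at h
    linear_combination h
  have hH1q : H1 = q1 := by linear_combination hHq1
  have hG2q : G2 = 2*q1 := by linear_combination 2*hgHs1 + 2*hH1q
  have hH2q : H2 = 2*q1^2 + q2 := by linear_combination hHq2 + 2*q1*hH1q
  have hG3q : G3 = 6*q1^2 + (3/2)*q2 := by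
    linear_combination (3/2)*hgHs2 + (3/2)*hH2q + (3/2)*G2*hH1q + (3/2)*q1*hG2q
  have h8 : 8*G3 - 6*G2^2 = 24*(q1^2 + q2/2) := by
    linear_combination 8*hG3q - 6*(G2+2*q1)*hG2q
  have ha3 : (3:ℂ)*a₃ = (q1^2 + q2/2) + B₂*c₁^2 + (B₁:ℂ)*c₂ := by
    linear_combination hE4/24 + h8/24
  have ha2 : a₂ = (B₁:ℂ)*c₁/2 := by linear_combination hE3/12
  have habsB₁ : ‖((B₁:ℝ):ℂ)‖ = B₁ := by
    rw [Complex.norm_real, Real.norm_eq_abs, abs_of_pos hB₁]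
  have hc1le : ‖c₁‖ ≤ 1 := hc1b
  have hc2le : ‖c₂‖ ≤ 1 - ‖c₁‖ ^ 2 := hc2b
  have hq1le : ‖q1‖ ≤ 1 := hq1b
  have hq2le : ‖q2/2‖ ≤ 1 - ‖q1‖ ^ 2 := hq2b
  have hh2le : ‖q1^2 + q2/2‖ ≤ 1 := by
    calc ‖q1^2 + q2/2‖ ≤ ‖q1^2‖ + ‖q2/2‖ :=
          norm_add_le _ _
      _ = ‖q1‖ ^ 2 + ‖q2/2‖ := by rw [norm_pow]
      _ ≤ ‖q1‖ ^ 2 + (1 - ‖q1‖ ^ 2) := by linarith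
      _ = 1 := by ring
  have ht0 : (0:ℝ) ≤ ‖c₁‖ ^ 2 := by positivity
  have ht1 : ‖c₁‖ ^ 2 ≤ 1 := by nlinarith [norm_nonneg c₁]
  have hmax1 : B₁ ≤ max B₁ (‖B₂‖) := le_max_left _ _
  have hmax2 : ‖B₂‖ ≤ max B₁ (‖B₂‖) := le_max_right _ _
  have habs3a : ‖(3:ℂ)*a₃‖ ≤ 1 + max B₁ (‖B₂‖) := by
    have h1 : ‖(3:ℂ)*a₃‖ ≤ ‖q1^2 + q2/2‖ + ‖B₂*c₁^2‖
        + ‖(B₁:ℂ)*c₂‖ := by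
      rw [ha3]
      calc ‖(q1^2 + q2/2) + B₂*c₁^2 + (B₁:ℂ)*c₂‖
          ≤ ‖(q1^2 + q2/2) + B₂*c₁^2‖ + ‖(B₁:ℂ)*c₂‖ :=
            norm_add_le _ _
        _ ≤ ‖q1^2 + q2/2‖ + ‖B₂*c₁^2‖ + ‖(B₁:ℂ)*c₂‖ := by
            have := norm_add_le (q1^2 + q2/2) (B₂*c₁^2)
            linarith
    have h2 : ‖B₂*c₁^2‖ = ‖B₂‖ * ‖c₁‖ ^ 2 := by
      rw [norm_mul, norm_pow]
    have h3 : ‖(B₁:ℂ)*c₂‖ = B₁ * ‖c₂‖ := by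
      rw [norm_mul, habsB₁]
    have h5 : B₁ * ‖c₂‖ ≤ B₁ * (1 - ‖c₁‖ ^ 2) :=
      mul_le_mul_of_nonneg_left hc2le hB₁.le
    have h6 : ‖B₂‖ * ‖c₁‖ ^ 2
        ≤ max B₁ (‖B₂‖) * ‖c₁‖ ^ 2 :=
      mul_le_mul_of_nonneg_right hmax2 ht0
    have h7 : B₁ * (1 - ‖c₁‖ ^ 2)
        ≤ max B₁ (‖B₂‖) * (1 - ‖c₁‖ ^ 2) :=
      mul_le_mul_of_nonneg_right hmax1 (by linarith)
    rw [h2, h3] at h1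
    nlinarith
  have habs3 : ‖(3:ℂ)*a₃‖ = 3 * ‖a₃‖ := by
    rw [norm_mul]
    norm_num
  have hmaxeq : B₁ * max 1 (‖B₂‖ / B₁) = max B₁ (‖B₂‖) := by
    rw [mul_max_of_nonneg _ _ hB₁.le, mul_one, mul_div_cancel₀ _ (ne_of_gt hB₁)]
  constructor
  · have h9 : 3 * ‖a₃‖ ≤ 1 + max B₁ (‖B₂‖) := by
      rw [← habs3]; exact habs3a
    have hgoal : 1 / 3 + (B₁ / 3) * max 1 (‖B₂‖ / B₁)
        = (1 + max B₁ (‖B₂‖))/3 := by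
      rw [div_mul_eq_mul_div, hmaxeq]
      ring
    rw [hgoal]
    linarith
  · rw [ha2, norm_div, norm_mul, habsB₁]
    simp only [Complex.norm_two]
    nlinarith [norm_nonneg c₁]
end

section
/- If f is analytic on 𝔻 with f(0)=0 and f'(0)=1, and for all z ∈ 𝔻 with |z| = r < 1 one has m(r) ≤ |f'(z)| where m is continuous nonnegative, then |f(z)| ≥ ∫₀^r m(t) dt for |z| = r, provided f is injective on 𝔻 (Privalov-type lower growth estimate via integrating the lower derivative bound along the preimage of the radial segment). -/
open Complex Metric Filter Set Topology

/-- If `γ` is differentiable and `‖γ‖` is differentiable, then the derivative of the norm is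
bounded by the norm of the derivative. -/
private lemma abs_deriv_norm_le {γ : ℝ → ℂ} {v : ℂ} {d x : ℝ} (hγ : HasDerivAt γ v x)
    (hd : HasDerivAt (fun t => ‖γ t‖) d x) : |d| ≤ ‖v‖ := by
  rw [hasDerivAt_iff_tendsto_slope] at hγ hd
  have h1 : Tendsto (fun y => |slope (fun t => ‖γ t‖) x y|) (𝓝[≠] x) (𝓝 |d|) := hd.abs
  have h2 : Tendsto (fun y => ‖slope γ x y‖) (𝓝[≠] x) (𝓝 ‖v‖) := hγ.norm
  refine le_of_tendsto_of_tendsto' h1 h2 (fun y => ?_)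
  simp only [slope_def_module, norm_smul, smul_eq_mul, abs_mul, norm_inv,
    Real.norm_eq_abs, abs_inv]
  exact mul_le_mul_of_nonneg_left (abs_norm_sub_norm_le _ _) (by positivity)

/-- The inverse function of an injective analytic map has a strict derivative at points where
the derivative of `f` does not vanish. -/
private lemma Gstrict (f : ℂ → ℂ) (hf : AnalyticOnNhd ℂ f (ball (0:ℂ) 1))
    (hinj : Set.InjOn f (ball (0:ℂ) 1)) {ζ : ℂ} (hζ : ζ ∈ ball (0:ℂ) 1)
    (hd : deriv f ζ ≠ 0) :
    HasStrictDerivAt (Function.invFunOn f (ball (0:ℂ) 1)) (deriv f ζ)⁻¹ (f ζ) := by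
  obtain ⟨p, hp⟩ := hf ζ hζ
  have hs := hp.hasStrictDerivAt
  rw [← hs.hasDerivAt.deriv] at hs
  refine hs.to_local_left_inverse hd ?_
  exact Filter.eventually_of_mem (isOpen_ball.mem_nhds hζ)
    (fun x hx => hinj.leftInvOn_invFunOn hx)

/-- Local openness: images of neighborhoods are neighborhoods (open mapping theorem). -/
private lemma img_nhds (f : ℂ → ℂ) (hf : AnalyticOnNhd ℂ f (ball (0:ℂ) 1))
    (hinj : Set.InjOn f (ball (0:ℂ) 1)) {a : ℂ} (ha : a ∈ ball (0:ℂ) 1)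
    {V : Set ℂ} (hV : V ∈ 𝓝 a) : f '' V ∈ 𝓝 (f a) := by
  have hnc : ¬ ∀ᶠ z in 𝓝 a, f z = f a := by
    intro h
    have h3 : ∀ᶠ z in 𝓝 a, f z = f a ∧ z ∈ ball (0:ℂ) 1 :=
      h.and (isOpen_ball.mem_nhds ha)
    obtain ⟨ε, hε, hb⟩ := Metric.eventually_nhds_iff.mp h3
    have hd : dist (a + (ε/2 : ℝ)) a < ε := by
      rw [Complex.dist_eq, add_sub_cancel_left, Complex.norm_real, Real.norm_eq_abs]
      rw [_root_.abs_of_pos (by linarith)]; linarith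
    obtain ⟨h4, h5⟩ := hb hd
    have := hinj h5 (h3.self_of_nhds.2) h4
    have : ((ε/2 : ℝ) : ℂ) = 0 := by
      have := congrArg (· - a) this
      simpa using this
    rw [Complex.ofReal_eq_zero] at this
    linarith
  have hle := (hf a ha).eventually_constant_or_nhds_le_map_nhds.resolve_left hnc
  exact hle (Filter.image_mem_map hV)

/-- The inverse function is continuous at every point of the image. -/
private lemma Gcont (f : ℂ → ℂ) (hf : AnalyticOnNhd ℂ f (ball (0:ℂ) 1))
    (hinj : Set.InjOn f (ball (0:ℂ) 1)) {a : ℂ} (ha : a ∈ ball (0:ℂ) 1) :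
    ContinuousAt (Function.invFunOn f (ball (0:ℂ) 1)) (f a) := by
  have hGa : Function.invFunOn f (ball (0:ℂ) 1) (f a) = a := hinj.leftInvOn_invFunOn ha
  rw [ContinuousAt, hGa, Metric.tendsto_nhds]
  intro ε hε
  have hV : (ball (0:ℂ) 1 ∩ ball a ε) ∈ 𝓝 a :=
    (isOpen_ball.inter isOpen_ball).mem_nhds ⟨ha, mem_ball_self hε⟩
  refine Filter.eventually_of_mem (img_nhds f hf hinj ha hV) ?_
  rintro w ⟨x, ⟨hxB, hxε⟩, rfl⟩
  rw [hinj.leftInvOn_invFunOn hxB]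
  exact hxε

/-- An injective analytic function on the disk with `deriv f 0 = 1` has nonvanishing
derivative. -/
private lemma deriv_ne_zero (f : ℂ → ℂ) (hf : AnalyticOnNhd ℂ f (ball (0:ℂ) 1))
    (hf1 : deriv f 0 = 1) (hinj : Set.InjOn f (ball (0:ℂ) 1)) {a : ℂ}
    (ha : a ∈ ball (0:ℂ) 1) : deriv f a ≠ 0 := by
  intro h0
  have hball0 : (0:ℂ) ∈ ball (0:ℂ) 1 := mem_ball_self one_pos
  have hdA : AnalyticOnNhd ℂ (deriv f) (ball (0:ℂ) 1) := hf.deriv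
  rcases (hdA a ha).eventually_eq_zero_or_eventually_ne_zero with hc | hc
  · have heq : deriv f =ᶠ[𝓝 a] 0 := by filter_upwards [hc] with x hx; simpa using hx
    have := hdA.eqOn_zero_of_preconnected_of_eventuallyEq_zero
      (convex_ball (0:ℂ) 1).isPreconnected ha heq hball0
    simp only [Pi.zero_apply] at this
    rw [hf1] at this
    exact one_ne_zero this
  · rw [eventually_nhdsWithin_iff] at hc
    have hc2 : ∀ᶠ z in 𝓝 a, (z ∈ ({a}ᶜ : Set ℂ) → deriv f z ≠ 0) ∧ z ∈ ball (0:ℂ) 1 :=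
      hc.and (isOpen_ball.mem_nhds ha)
    obtain ⟨ρ, hρpos, hρ⟩ := Metric.eventually_nhds_iff_ball.mp hc2
    set G := Function.invFunOn f (ball (0:ℂ) 1) with hGdef
    have hW : f '' (ball a ρ) ∈ 𝓝 (f a) :=
      img_nhds f hf hinj ha (ball_mem_nhds a hρpos)
    have hdiffW : DifferentiableOn ℂ G ((f '' ball a ρ) \ {f a}) := by
      rintro w ⟨⟨x, hx, rfl⟩, hwne⟩
      have hxB : x ∈ ball (0:ℂ) 1 := (hρ x hx).2
      have hxa : x ≠ a := by
        intro h; exact hwne (by rw [h]; exact rfl)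
      have hdx : deriv f x ≠ 0 := (hρ x hx).1 hxa
      exact (HasStrictDerivAt.hasDerivAt (Gstrict f hf hinj hxB hdx)).differentiableAt.differentiableWithinAt
    have hGdiff : DifferentiableOn ℂ G (f '' ball a ρ) :=
      (Complex.differentiableOn_compl_singleton_and_continuousAt_iff hW).mp
        ⟨hdiffW, Gcont f hf hinj ha⟩
    have hGat : DifferentiableAt ℂ G (f a) := hGdiff.differentiableAt hW
    have hfat : HasDerivAt f (deriv f a) a := ((hf a ha).differentiableAt).hasDerivAt
    have hGa : G (f a) = a := hinj.leftInvOn_invFunOn ha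
    have hcomp : HasDerivAt (f ∘ G) (deriv f a * deriv G (f a)) (f a) := by
      have h1 := hGat.hasDerivAt
      have h2 : HasDerivAt f (deriv f a) (G (f a)) := by rw [hGa]; exact hfat
      exact h2.comp (f a) h1
    have hid : HasDerivAt (f ∘ G) 1 (f a) := by
      refine (hasDerivAt_id (f a)).congr_of_eventuallyEq ?_
      filter_upwards [hW] with w hw
      obtain ⟨x, hx, rfl⟩ := hw
      have hGx : G (f x) = x := hinj.leftInvOn_invFunOn ((hρ x hx).2)
      show f (G (f x)) = id (f x)
      rw [hGx]
      rfl
    have huniq := hcomp.unique hid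
    rw [h0, zero_mul] at huniq
    exact zero_ne_one huniq

theorem privalov_lower_growth (f : ℂ → ℂ)
    (hf : AnalyticOnNhd ℂ f (ball (0:ℂ) 1)) (hf0 : f 0 = 0) (hf1 : deriv f 0 = 1)
    (hinj : Set.InjOn f (ball (0:ℂ) 1))
    (m : ℝ → ℝ) (hmc : ContinuousOn m (Set.Ico 0 1))
    (hm0 : ∀ t ∈ Set.Ico (0:ℝ) 1, 0 ≤ m t)
    (hlow : ∀ z ∈ ball (0:ℂ) 1, m ‖z‖ ≤ ‖deriv f z‖) :
    ∀ z ∈ ball (0:ℂ) 1, (∫ t in (0:ℝ)..‖z‖, m t) ≤ ‖f z‖ := by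
  intro z hz
  by_cases hz0 : z = 0
  · subst hz0; simp [hf0]
  -- setup
  have hr1 : ‖z‖ < 1 := by rwa [mem_ball_zero_iff] at hz
  have hr0 : 0 < ‖z‖ := norm_pos_iff.mpr hz0
  set w := f z with hwdef
  have hw0 : w ≠ 0 := by
    intro h
    exact hz0 (hinj hz (mem_ball_self one_pos) (by rw [hf0, ← hwdef, h]))
  set U := f '' (ball (0:ℂ) 1) with hUdef
  set G := Function.invFunOn f (ball (0:ℂ) 1) with hGdef
  have hGmem : ∀ u ∈ U, G u ∈ ball (0:ℂ) 1 := by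
    rintro u ⟨x, hx, rfl⟩; exact Function.invFunOn_mem (f := f) (s := ball (0:ℂ) 1) ⟨x, hx, rfl⟩
  have hGeq : ∀ u ∈ U, f (G u) = u := by
    rintro u ⟨x, hx, rfl⟩; exact Function.invFunOn_eq (f := f) (s := ball (0:ℂ) 1) ⟨x, hx, rfl⟩
  have hGf : ∀ ζ ∈ ball (0:ℂ) 1, G (f ζ) = ζ := fun ζ hζ => hinj.leftInvOn_invFunOn hζ
  have hUopen : IsOpen U := by
    rw [isOpen_iff_mem_nhds]
    rintro u ⟨x, hx, rfl⟩
    exact img_nhds f hf hinj hx (isOpen_ball.mem_nhds hx)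
  set γ : ℝ → ℂ := fun s => G ((s:ℂ) * w) with hγdef
  set pre : Set ℝ := {s | (s:ℂ) * w ∈ U} with hpredef
  have hpre_open : IsOpen pre :=
    hUopen.preimage (Complex.continuous_ofReal.mul continuous_const)
  have h0pre : (0:ℝ) ∈ pre := by
    show ((0:ℝ):ℂ) * w ∈ U
    rw [Complex.ofReal_zero, zero_mul]
    exact ⟨0, mem_ball_self one_pos, hf0⟩
  have h1pre : (1:ℝ) ∈ pre := by
    show ((1:ℝ):ℂ) * w ∈ U
    rw [Complex.ofReal_one, one_mul]
    exact ⟨z, hz, rfl⟩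
  have hγB : ∀ s ∈ pre, γ s ∈ ball (0:ℂ) 1 := fun s hs => hGmem _ hs
  have hfγ : ∀ s ∈ pre, f (γ s) = (s:ℂ) * w := fun s hs => hGeq _ hs
  have hγzero : γ 0 = 0 := by
    have h := hGf 0 (mem_ball_self one_pos)
    rw [hf0] at h
    show G (((0:ℝ):ℂ) * w) = 0
    rw [Complex.ofReal_zero, zero_mul]
    exact h
  have hγne : ∀ s ∈ pre, s ≠ 0 → γ s ≠ 0 := by
    intro s hs hs0 hcon
    have h := hfγ s hs
    rw [hcon, hf0] at h
    rcases mul_eq_zero.mp h.symm with h' | h'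
    · exact hs0 (by exact_mod_cast h')
    · exact hw0 h'
  have hd0 : ∀ s ∈ pre, deriv f (γ s) ≠ 0 :=
    fun s hs => deriv_ne_zero f hf hf1 hinj (hγB s hs)
  have hγder : ∀ s ∈ pre, HasDerivAt γ (w * (deriv f (γ s))⁻¹) s := by
    intro s hs
    have h1 : HasDerivAt (fun t : ℝ => (t:ℂ) * w) w s := by
      simpa using ((hasDerivAt_id s).ofReal_comp.mul_const w)
    have h2 : HasStrictDerivAt G (deriv f (γ s))⁻¹ ((s:ℂ) * w) := by
      have := Gstrict f hf hinj (hγB s hs) (hd0 s hs)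
      rwa [hfγ s hs] at this
    have h3 := HasDerivAt.scomp s h2.hasDerivAt h1
    rw [smul_eq_mul] at h3
    exact h3
  set α : ℝ → ℝ := fun t => ‖γ t‖ with hαdef
  set ψ : ℝ → ℝ := fun s => ∫ t in (0:ℝ)..(α s), m t with hψdef
  have hα1 : ∀ s ∈ pre, α s < 1 := by
    intro s hs; have := hγB s hs; rwa [mem_ball_zero_iff] at this
  have hα0 : ∀ s, 0 ≤ α s := fun s => norm_nonneg _
  have hαpos : ∀ s ∈ pre, s ≠ 0 → 0 < α s := by
    intro s hs hs0; exact norm_pos_iff.mpr (hγne s hs hs0)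
  have hint : ∀ t, 0 ≤ t → t < 1 → IntervalIntegrable m MeasureTheory.volume 0 t := by
    intro t h0 h1
    apply ContinuousOn.intervalIntegrable
    apply hmc.mono
    rw [Set.uIcc_of_le h0]
    exact fun u hu => ⟨hu.1, lt_of_le_of_lt hu.2 h1⟩
  have hmono : ∀ t₁ t₂, 0 ≤ t₁ → t₁ ≤ t₂ → t₂ < 1 →
      (∫ u in (0:ℝ)..t₁, m u) ≤ ∫ u in (0:ℝ)..t₂, m u := by
    intro t₁ t₂ h0 h12 h2
    have ha := hint t₁ h0 (lt_of_le_of_lt h12 h2)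
    have hb : IntervalIntegrable m MeasureTheory.volume t₁ t₂ := by
      apply ContinuousOn.intervalIntegrable
      apply hmc.mono
      rw [Set.uIcc_of_le h12]
      exact fun u hu => ⟨le_trans h0 hu.1, lt_of_le_of_lt hu.2 h2⟩
    have hnn : 0 ≤ ∫ u in t₁..t₂, m u :=
      intervalIntegral.integral_nonneg h12
        (fun u hu => hm0 u ⟨le_trans h0 hu.1, lt_of_le_of_lt hu.2 h2⟩)
    have := intervalIntegral.integral_add_adjacent_intervals ha hb
    linarith
  -- derivative of ψ and bound
  have hψder : ∀ x ∈ pre, x ≠ 0 → HasDerivAt ψ (m (α x) * deriv α x) x := by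
    intro x hx hx0
    have hγd := hγder x hx
    have hαd : DifferentiableAt ℝ α x := hγd.differentiableAt.norm ℝ (hγne x hx hx0)
    have hαder : HasDerivAt α (deriv α x) x := hαd.hasDerivAt
    have h01 : 0 < α x := hαpos x hx hx0
    have h1 : α x < 1 := hα1 x hx
    have hIoo : Set.Ioo (0:ℝ) 1 ∈ 𝓝 (α x) := Ioo_mem_nhds h01 h1
    have hcont : ContinuousAt m (α x) :=
      (hmc (α x) ⟨h01.le, h1⟩).continuousAt
        (Filter.mem_of_superset hIoo Set.Ioo_subset_Ico_self)
    have hmeas : StronglyMeasurableAtFilter m (𝓝 (α x)) MeasureTheory.volume :=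
      ContinuousOn.stronglyMeasurableAtFilter isOpen_Ioo
        (hmc.mono Set.Ioo_subset_Ico_self) (α x) ⟨h01, h1⟩
    have hM : HasDerivAt (fun t => ∫ u in (0:ℝ)..t, m u) (m (α x)) (α x) :=
      intervalIntegral.integral_hasDerivAt_right (hint (α x) h01.le h1) hmeas hcont
    exact HasDerivAt.comp x hM hαder
  have hDb : ∀ x ∈ pre, x ≠ 0 → ‖m (α x) * deriv α x‖ ≤ ‖w‖ := by
    intro x hx hx0
    have hγd := hγder x hx
    have hαder : HasDerivAt α (deriv α x) x :=
      (hγd.differentiableAt.norm ℝ (hγne x hx hx0)).hasDerivAt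
    have hdle : |deriv α x| ≤ ‖w * (deriv f (γ x))⁻¹‖ := abs_deriv_norm_le hγd hαder
    have hml : m (α x) ≤ ‖deriv f (γ x)‖ := by
      have := hlow (γ x) (hγB x hx)
      exact this
    have hmn : 0 ≤ m (α x) := hm0 _ ⟨hα0 x, hα1 x hx⟩
    have hfne : ‖deriv f (γ x)‖ ≠ 0 := by
      simpa using (hd0 x hx)
    have hfpos : 0 < ‖deriv f (γ x)‖ := lt_of_le_of_ne (norm_nonneg _) (Ne.symm hfne)
    rw [Real.norm_eq_abs, abs_mul, _root_.abs_of_nonneg hmn]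
    calc m (α x) * |deriv α x| ≤ m (α x) * ‖w * (deriv f (γ x))⁻¹‖ :=
          mul_le_mul_of_nonneg_left hdle hmn
      _ = m (α x) * (‖w‖ * ‖deriv f (γ x)‖⁻¹) := by rw [norm_mul, norm_inv]
      _ ≤ ‖deriv f (γ x)‖ * (‖w‖ * ‖deriv f (γ x)‖⁻¹) := by
          apply mul_le_mul_of_nonneg_right hml
          positivity
      _ = ‖w‖ := by
          rw [← mul_assoc, mul_comm ‖deriv f (γ x)‖ ‖w‖, mul_assoc,
            mul_inv_cancel₀ hfne, mul_one]
  -- MVT on intervals away from zero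
  have hkey : ∀ ε s : ℝ, 0 < ε → ε ≤ s → Set.Icc ε s ⊆ pre →
      ψ s - ψ ε ≤ ‖w‖ * (s - ε) := by
    intro ε s hε hεs hsub
    have := Convex.norm_image_sub_le_of_norm_hasDerivWithin_le
      (f := ψ) (f' := fun x => m (α x) * deriv α x) (s := Set.Icc ε s)
      (fun x hxm => ((hψder x (hsub hxm) (ne_of_gt (lt_of_lt_of_le hε hxm.1))).hasDerivWithinAt))
      (fun x hxm => hDb x (hsub hxm) (ne_of_gt (lt_of_lt_of_le hε hxm.1)))
      (convex_Icc ε s) ⟨le_refl ε, hεs⟩ ⟨hεs, le_refl s⟩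
    have h2 : ψ s - ψ ε ≤ ‖ψ s - ψ ε‖ := le_abs_self _
    have h3 : ‖s - ε‖ = s - ε := by rw [Real.norm_eq_abs, _root_.abs_of_nonneg (by linarith)]
    rw [h3] at this
    linarith
  -- ψ tends to 0 at 0+
  have hψ0 : Tendsto ψ (𝓝[>] (0:ℝ)) (𝓝 0) := by
    have hsub12 : Set.Icc (0:ℝ) (1/2) ⊆ Set.Ico 0 1 := by
      intro u hu; exact ⟨hu.1, by linarith [hu.2]⟩
    obtain ⟨C, hC⟩ := (isCompact_Icc (a := (0:ℝ)) (b := 1/2)).exists_bound_of_continuousOn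
      (hmc.mono hsub12)
    have hγcont : ContinuousAt γ 0 := (hγder 0 h0pre).continuousAt
    have htend : Tendsto α (𝓝 0) (𝓝 0) := by
      have := hγcont.norm
      simpa [hγzero] using this.tendsto
    have hev : ∀ᶠ ε in 𝓝[>] (0:ℝ), ε ∈ pre ∧ α ε < 1/2 := by
      have e1 : ∀ᶠ ε in 𝓝 (0:ℝ), ε ∈ pre := hpre_open.mem_nhds h0pre
      have e2 : ∀ᶠ ε in 𝓝 (0:ℝ), α ε < 1/2 :=
        htend.eventually_lt_const (by norm_num : (0:ℝ) < 1/2)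
      exact (e1.and e2).filter_mono nhdsWithin_le_nhds
    apply squeeze_zero' (f := ψ) (g := fun ε => α ε * C)
    · filter_upwards [hev] with ε hε
      exact intervalIntegral.integral_nonneg (hα0 ε)
        (fun u hu => hm0 u ⟨hu.1, lt_of_le_of_lt hu.2 (hα1 ε hε.1)⟩)
    · filter_upwards [hev] with ε hε
      have hI : IntervalIntegrable m MeasureTheory.volume 0 (α ε) :=
        hint (α ε) (hα0 ε) (hα1 ε hε.1)
      have := intervalIntegral.integral_mono_on (hα0 ε) hI intervalIntegrable_const
        (fun u hu => le_trans (le_abs_self _)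
          (hC u ⟨hu.1, le_trans hu.2 hε.2.le⟩))
      simpa using this
    · have : Tendsto (fun ε => α ε * C) (𝓝 (0:ℝ)) (𝓝 (0 * C)) := htend.mul_const C
      rw [zero_mul] at this
      exact this.mono_left nhdsWithin_le_nhds
  -- main bound ψ s ≤ ‖w‖ * s
  have hψle : ∀ s : ℝ, 0 < s → Set.Icc (0:ℝ) s ⊆ pre → ψ s ≤ ‖w‖ * s := by
    intro s hs hsub
    have hev : ∀ᶠ ε in 𝓝[>] (0:ℝ), ψ s ≤ ψ ε + ‖w‖ * (s - ε) := by
      filter_upwards [Ioc_mem_nhdsGT hs] with ε hε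
      have := hkey ε s hε.1 hε.2 (fun x hx => hsub ⟨le_trans hε.1.le hx.1, hx.2⟩)
      linarith
    have hlim : Tendsto (fun ε => ψ ε + ‖w‖ * (s - ε)) (𝓝[>] (0:ℝ))
        (𝓝 (0 + ‖w‖ * (s - 0))) := by
      apply hψ0.add
      apply Filter.Tendsto.const_mul
      exact (tendsto_const_nhds.sub (tendsto_id.mono_left nhdsWithin_le_nhds))
    have := ge_of_tendsto hlim hev
    rw [sub_zero, zero_add] at this
    exact this
  -- the set A and its supremum T
  set A : Set ℝ := {s | s ∈ Set.Icc (0:ℝ) 1 ∧ Set.Icc 0 s ⊆ pre} with hAdef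
  have hA0 : (0:ℝ) ∈ A := by
    refine ⟨⟨le_refl 0, zero_le_one⟩, ?_⟩
    intro x hx
    have : x = 0 := le_antisymm hx.2 hx.1
    rwa [this]
  have hAbdd : BddAbove A := ⟨1, fun x hx => hx.1.2⟩
  have hAne : A.Nonempty := ⟨0, hA0⟩
  set T := sSup A with hTdef
  have hT1 : T ≤ 1 := csSup_le hAne (fun x hx => hx.1.2)
  have hT0 : 0 ≤ T := le_csSup hAbdd hA0
  have hTpre : ∀ x, 0 ≤ x → x < T → x ∈ pre := by
    intro x h0 hxT
    obtain ⟨a, haA, hxa⟩ := exists_lt_of_lt_csSup hAne hxT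
    exact haA.2 ⟨h0, hxa.le⟩
  have hTpos : 0 < T := by
    obtain ⟨δ, hδ, hball⟩ := Metric.isOpen_iff.mp hpre_open 0 h0pre
    have htpos : 0 < min (δ/2) 1 := lt_min (by linarith) one_pos
    have htA : min (δ/2) 1 ∈ A := by
      refine ⟨⟨htpos.le, min_le_right _ _⟩, ?_⟩
      intro x hx
      apply hball
      rw [mem_ball, Real.dist_eq, sub_zero, _root_.abs_of_nonneg hx.1]
      exact lt_of_le_of_lt (le_trans hx.2 (min_le_left _ _)) (by linarith)
    exact lt_of_lt_of_le htpos (le_csSup hAbdd htA)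
  by_cases hTA : Set.Icc (0:ℝ) 1 ⊆ pre
  · -- the whole segment is in the image
    have hfin := hψle 1 one_pos hTA
    have hγ1 : γ 1 = z := by
      show G (((1:ℝ):ℂ) * w) = z
      rw [Complex.ofReal_one, one_mul]
      exact hGf z hz
    have hψ1 : ψ 1 = ∫ t in (0:ℝ)..‖z‖, m t := by
      simp only [hψdef, hαdef, hγ1]
    rw [hψ1, mul_one] at hfin
    exact hfin
  · -- T < 1 : the curve leaves every compact subset
    have hT1' : T < 1 := by
      rcases lt_or_eq_of_le hT1 with h | h
      · exact h
      · exfalso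
        apply hTA
        intro x hx
        rcases lt_or_eq_of_le hx.2 with h' | h'
        · exact hTpre x hx.1 (by rwa [h])
        · rw [h']; exact h1pre
    have hTnotpre : T ∉ pre := by
      intro hTp
      obtain ⟨δ, hδ, hball⟩ := Metric.isOpen_iff.mp hpre_open T hTp
      have h1 : T < min (T + δ/2) 1 := lt_min (by linarith) hT1'
      have htA : min (T + δ/2) 1 ∈ A := by
        refine ⟨⟨le_trans hT0 h1.le, min_le_right _ _⟩, ?_⟩
        intro x hx
        rcases lt_or_ge x T with h' | h'
        · exact hTpre x hx.1 h'
        · apply hball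
          rw [mem_ball, Real.dist_eq, _root_.abs_of_nonneg (by linarith)]
          have : x ≤ T + δ/2 := le_trans hx.2 (min_le_left _ _)
          linarith
      exact absurd (le_csSup hAbdd htA) (not_le.mpr h1)
    have hexists : ∃ s₀, 0 < s₀ ∧ s₀ < T ∧ ‖z‖ < α s₀ := by
      by_contra hcon
      push_neg at hcon
      set u : ℕ → ℝ := fun n => T - T / (n + 2) with hudef
      have hu_mem : ∀ n, 0 < u n ∧ u n < T := by
        intro n
        have hn2 : (1:ℝ) < (n:ℝ) + 2 := by
          have : (0:ℝ) ≤ (n:ℝ) := Nat.cast_nonneg n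
          linarith
        have hdivpos : 0 < T / ((n:ℝ) + 2) := div_pos hTpos (by linarith)
        constructor
        · have := div_lt_self hTpos hn2
          simp only [hudef]
          linarith
        · simp only [hudef]; linarith
      have hγu : ∀ n, γ (u n) ∈ closedBall (0:ℂ) ‖z‖ := by
        intro n
        rw [mem_closedBall_zero_iff]
        exact hcon (u n) (hu_mem n).1 (hu_mem n).2
      obtain ⟨ζ, hζr, φ, hφ, hζlim⟩ :=
        (isCompact_closedBall (0:ℂ) ‖z‖).tendsto_subseq hγu
      have hζB : ζ ∈ ball (0:ℂ) 1 := by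
        rw [mem_ball_zero_iff]
        exact lt_of_le_of_lt (mem_closedBall_zero_iff.mp hζr) hr1
      have hulim : Tendsto u atTop (𝓝 T) := by
        have h2 : Tendsto (fun n : ℕ => (n:ℝ) + 2) atTop atTop :=
          tendsto_atTop_add_const_right atTop 2 tendsto_natCast_atTop_atTop
        have h3 : Tendsto (fun n : ℕ => T / ((n:ℝ) + 2)) atTop (𝓝 0) :=
          h2.const_div_atTop T
        have h4 : Tendsto (fun n : ℕ => T - T / ((n:ℝ) + 2)) atTop (𝓝 (T - 0)) :=
          Tendsto.sub tendsto_const_nhds h3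
        rw [sub_zero] at h4
        exact h4
      have huφ : Tendsto (fun k => u (φ k)) atTop (𝓝 T) := hulim.comp hφ.tendsto_atTop
      have h1 : Tendsto (fun k => f (γ (u (φ k)))) atTop (𝓝 (f ζ)) :=
        ((hf ζ hζB).continuousAt.tendsto).comp hζlim
      have h2 : Tendsto (fun k => f (γ (u (φ k)))) atTop (𝓝 ((T:ℂ) * w)) := by
        have hcast : Tendsto (fun k => ((u (φ k) : ℝ) : ℂ)) atTop (𝓝 ((T:ℝ):ℂ)) :=
          (Complex.continuous_ofReal.tendsto T).comp huφ
        have := hcast.mul_const w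
        apply Tendsto.congr _ this
        intro k
        exact (hfγ _ (hTpre _ (hu_mem _).1.le (hu_mem _).2)).symm
      have hfζ : f ζ = (T:ℂ) * w := tendsto_nhds_unique h1 h2
      exact hTnotpre ⟨ζ, hζB, hfζ⟩
    obtain ⟨s₀, hs₀0, hs₀T, hrα⟩ := hexists
    have hpre_s₀ : Set.Icc (0:ℝ) s₀ ⊆ pre :=
      fun x hx => hTpre x hx.1 (lt_of_le_of_lt hx.2 hs₀T)
    have hs₀pre : s₀ ∈ pre := hpre_s₀ ⟨hs₀0.le, le_refl s₀⟩
    have h1 : ψ s₀ ≤ ‖w‖ * s₀ := hψle s₀ hs₀0 hpre_s₀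
    have h2 : (∫ t in (0:ℝ)..‖z‖, m t) ≤ ψ s₀ :=
      hmono ‖z‖ (α s₀) hr0.le hrα.le (hα1 s₀ hs₀pre)
    have h3 : ‖w‖ * s₀ ≤ ‖w‖ :=  by
      have : s₀ ≤ 1 := le_of_lt (lt_of_lt_of_le hs₀T hT1)
      nlinarith [norm_nonneg w]
    have hfin : (∫ t in (0:ℝ)..‖z‖, m t) ≤ ‖w‖ := by linarith
    exact hfin
end
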